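/- The Mordell integral h(z; τ) := ∫_ℝ e^{πiτt² - 2πzt} / cosh(πt) dt satisfies h(z; τ) + h(z+1; τ) = (2/√(-iτ)) e^{πi(z+1/2)²/τ} for all z ∈ ℂ and τ in the upper half-plane. -/

import Mathlib

open Complex MeasureTheory

lemma mordell_cosh_ne (t : ℝ) : Complex.cosh ((Real.pi : ℂ) * (t : ℂ)) ≠ 0 := by
  have h : ((Real.pi : ℂ) * (t : ℂ)) = ((Real.pi * t : ℝ) : ℂ) := by push_cast; ring
  rw [h, ← Complex.ofReal_cosh]
  exact_mod_cast (Real.cosh_pos _).ne'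

lemma mordell_one_le_norm_cosh (t : ℝ) : 1 ≤ ‖Complex.cosh ((Real.pi : ℂ) * (t : ℂ))‖ := by
  have h : ((Real.pi : ℂ) * (t : ℂ)) = ((Real.pi * t : ℝ) : ℂ) := by push_cast; ring
  rw [h, ← Complex.ofReal_cosh, Complex.norm_real, Real.norm_eq_abs,
    abs_of_pos (Real.cosh_pos _)]
  exact Real.one_le_cosh _

lemma mordell_hb (τ : ℂ) (hτ : 0 < τ.im) : ((Real.pi : ℂ) * I * τ).re < 0 := by
  simp only [Complex.mul_re, Complex.mul_im, Complex.I_re, Complex.I_im,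
    Complex.ofReal_re, Complex.ofReal_im]
  nlinarith [Real.pi_pos, hτ]

lemma mordell_integrable (z τ : ℂ) (hτ : 0 < τ.im) :
    Integrable (fun t : ℝ ↦
      Complex.exp ((Real.pi : ℂ) * I * τ * (t : ℂ) ^ 2 - 2 * (Real.pi : ℂ) * z * (t : ℂ))
        / Complex.cosh ((Real.pi : ℂ) * (t : ℂ))) := by
  have hg : Integrable (fun t : ℝ ↦
      Complex.exp ((Real.pi : ℂ) * I * τ * (t : ℂ) ^ 2 + (-2 * (Real.pi : ℂ) * z) * (t : ℂ) + 0)) :=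
    integrable_cexp_quadratic' (mordell_hb τ hτ) _ _
  apply hg.mono
  · apply Continuous.aestronglyMeasurable
    exact Continuous.div (by fun_prop) (by fun_prop) (fun t ↦ mordell_cosh_ne t)
  · filter_upwards with t
    have harg : (Real.pi : ℂ) * I * τ * (t : ℂ) ^ 2 - 2 * (Real.pi : ℂ) * z * (t : ℂ)
        = (Real.pi : ℂ) * I * τ * (t : ℂ) ^ 2 + (-2 * (Real.pi : ℂ) * z) * (t : ℂ) + 0 := by ring
    rw [norm_div, harg]
    exact div_le_self (norm_nonneg _) (mordell_one_le_norm_cosh t)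

/-- The Mordell integral `h(z; τ) = ∫_ℝ e^{πiτt² - 2πzt}/cosh(πt) dt`. -/
noncomputable def mordellH (z τ : ℂ) : ℂ :=
  ∫ t : ℝ, Complex.exp ((Real.pi : ℂ) * I * τ * (t : ℂ) ^ 2 - 2 * (Real.pi : ℂ) * z * (t : ℂ))
    / Complex.cosh ((Real.pi : ℂ) * (t : ℂ))

/-- `h(z; τ) + h(z+1; τ) = (2/√(-iτ)) e^{πi(z+1/2)²/τ}`. -/
theorem mordellH_add_one (z τ : ℂ) (hτ : 0 < τ.im) :
    mordellH z τ + mordellH (z + 1) τ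
      = 2 / (-I * τ) ^ (1 / 2 : ℂ)
        * Complex.exp ((Real.pi : ℂ) * I * (z + 1 / 2) ^ 2 / τ) := by
  have hπ : (Real.pi : ℂ) ≠ 0 := Complex.ofReal_ne_zero.2 Real.pi_ne_zero
  have hτ0 : τ ≠ 0 := by
    rintro rfl; simp at hτ
  rw [mordellH, mordellH,
    ← integral_add (mordell_integrable z τ hτ) (mordell_integrable (z + 1) τ hτ)]
  have key : ∀ t : ℝ,
      Complex.exp ((Real.pi : ℂ) * I * τ * (t : ℂ) ^ 2 - 2 * (Real.pi : ℂ) * z * (t : ℂ))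
          / Complex.cosh ((Real.pi : ℂ) * (t : ℂ))
        + Complex.exp ((Real.pi : ℂ) * I * τ * (t : ℂ) ^ 2
            - 2 * (Real.pi : ℂ) * (z + 1) * (t : ℂ))
          / Complex.cosh ((Real.pi : ℂ) * (t : ℂ))
      = 2 * Complex.exp ((Real.pi : ℂ) * I * τ * (t : ℂ) ^ 2
          + (-2 * (Real.pi : ℂ) * (z + 1 / 2)) * (t : ℂ) + 0) := by
    intro t
    have hC := mordell_cosh_ne t
    rw [← add_div, div_eq_iff hC]
    have e1 : (Real.pi : ℂ) * I * τ * (t : ℂ) ^ 2 - 2 * (Real.pi : ℂ) * z * (t : ℂ)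
        = ((Real.pi : ℂ) * I * τ * (t : ℂ) ^ 2
            + (-2 * (Real.pi : ℂ) * (z + 1 / 2)) * (t : ℂ) + 0)
          + (Real.pi : ℂ) * (t : ℂ) := by ring
    have e2 : (Real.pi : ℂ) * I * τ * (t : ℂ) ^ 2 - 2 * (Real.pi : ℂ) * (z + 1) * (t : ℂ)
        = ((Real.pi : ℂ) * I * τ * (t : ℂ) ^ 2
            + (-2 * (Real.pi : ℂ) * (z + 1 / 2)) * (t : ℂ) + 0)
          + -((Real.pi : ℂ) * (t : ℂ)) := by ring
    rw [e1, e2]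
    simp only [Complex.exp_add, Complex.exp_zero, Complex.exp_neg, Complex.cosh]
    ring
  simp_rw [key]
  rw [integral_const_mul, integral_cexp_quadratic (mordell_hb τ hτ)]
  have hre : (0 : ℝ) < (-I * τ).re := by
    simp only [Complex.neg_re, Complex.mul_re, Complex.I_re, Complex.I_im]
    simpa using hτ
  have harg : (-I * τ).arg ≠ Real.pi := by
    intro h
    rw [Complex.arg_eq_pi_iff] at h
    linarith [h.1]
  have hbase : (Real.pi : ℂ) / -((Real.pi : ℂ) * I * τ) = (-I * τ)⁻¹ := by
    field_simp
  have hpow : ((Real.pi : ℂ) / -((Real.pi : ℂ) * I * τ)) ^ (1 / 2 : ℂ)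
      = ((-I * τ) ^ (1 / 2 : ℂ))⁻¹ := by
    rw [hbase, Complex.inv_cpow _ _ harg]
  have hexp : (0 : ℂ) - (-2 * (Real.pi : ℂ) * (z + 1 / 2)) ^ 2 / (4 * ((Real.pi : ℂ) * I * τ))
      = (Real.pi : ℂ) * I * (z + 1 / 2) ^ 2 / τ := by
    have h4 : (4 : ℂ) * ((Real.pi : ℂ) * I * τ) ≠ 0 := by
      simp [hπ, hτ0, Complex.I_ne_zero]
    have h0 : (0 : ℂ) - (-2 * (Real.pi : ℂ) * (z + 1 / 2)) ^ 2 / (4 * ((Real.pi : ℂ) * I * τ))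
        = (-((-2 * (Real.pi : ℂ) * (z + 1 / 2)) ^ 2)) / (4 * ((Real.pi : ℂ) * I * τ)) := by
      ring
    rw [h0, div_eq_div_iff h4 hτ0]
    linear_combination (-4 * (Real.pi : ℂ) ^ 2 * (z + 1 / 2) ^ 2 * τ) * Complex.I_sq
  rw [hpow, hexp]
  ring
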